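/- arXiv:2012.11756 — 7 statements merged into one kernel-verified Lean document; each statement's English description precedes it below -/
import Mathlib

section
/- For every positive integer x, the sum over i from 1 to x of M(⌊x/i⌋)·log(i) equals ψ(x), the second Chebyshev function. -/
open Finset ArithmeticFunction

/-- The Mertens function `M(n) = ∑_{k=1}^n μ(k)`. -/
def mertens (n : ℕ) : ℤ := ∑ k ∈ Finset.Icc 1 n, ArithmeticFunction.moebius k

lemma swap_sum (x : ℕ) (F : ℕ → ℕ → ℝ) :
    ∑ n ∈ Finset.Icc 1 x, ∑ p ∈ n.divisorsAntidiagonal, F p.1 p.2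
      = ∑ i ∈ Finset.Icc 1 x, ∑ k ∈ Finset.Icc 1 (x / i), F i k := by
  rw [Finset.sum_sigma', Finset.sum_sigma']
  apply Finset.sum_nbij' (fun p => ⟨p.2.1, p.2.2⟩) (fun p => ⟨p.1 * p.2, p.1, p.2⟩)
  · rintro ⟨n, a, b⟩ h
    simp only [Finset.mem_sigma, Finset.mem_Icc, Nat.mem_divisorsAntidiagonal] at h ⊢
    obtain ⟨⟨hn1, hnx⟩, hab, hn0⟩ := h
    have ha : 0 < a := by
      rcases Nat.eq_zero_or_pos a with h0 | h0
      · subst h0; simp at hab; omega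
      · exact h0
    have hb : 0 < b := by
      rcases Nat.eq_zero_or_pos b with h0 | h0
      · subst h0; simp at hab; omega
      · exact h0
    refine ⟨⟨ha, ?_⟩, hb, ?_⟩
    · calc a ≤ a * b := Nat.le_mul_of_pos_right a hb
        _ ≤ x := by omega
    · rw [Nat.le_div_iff_mul_le ha, mul_comm]
      omega
  · rintro ⟨i, k⟩ h
    simp only [Finset.mem_sigma, Finset.mem_Icc, Nat.mem_divisorsAntidiagonal] at h ⊢
    obtain ⟨⟨hi1, hix⟩, hk1, hk⟩ := h
    have h2 := (Nat.le_div_iff_mul_le (by omega : 0 < i)).mp hk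
    rw [mul_comm] at h2
    have hik : 0 < i * k := Nat.mul_pos (by omega) (by omega)
    exact ⟨⟨hik, h2⟩, trivial, hik.ne'⟩
  · rintro ⟨n, a, b⟩ h
    simp only [Finset.mem_sigma, Nat.mem_divisorsAntidiagonal] at h
    obtain ⟨-, hab, -⟩ := h
    simp [hab]
  · rintro ⟨i, k⟩ h
    rfl
  · rintro ⟨n, a, b⟩ h
    rfl

theorem stmt4 (x : ℕ) (hx : 0 < x) :
    ∑ i ∈ Finset.Icc 1 x, (mertens (x / i) : ℝ) * Real.log i =
      ∑ i ∈ Finset.Icc 1 x, ArithmeticFunction.vonMangoldt i := by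
  have key := swap_sum x (fun a b => ((moebius b : ℤ) : ℝ) * Real.log a)
  calc ∑ i ∈ Finset.Icc 1 x, (mertens (x / i) : ℝ) * Real.log i
      = ∑ i ∈ Finset.Icc 1 x, ∑ k ∈ Finset.Icc 1 (x / i),
          ((moebius k : ℤ) : ℝ) * Real.log i := by
        refine Finset.sum_congr rfl fun i _ => ?_
        rw [← Finset.sum_mul, mertens]
        push_cast
        ring
    _ = ∑ n ∈ Finset.Icc 1 x, ∑ p ∈ n.divisorsAntidiagonal,
          ((moebius p.2 : ℤ) : ℝ) * Real.log p.1 := key.symm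
    _ = ∑ n ∈ Finset.Icc 1 x, ArithmeticFunction.vonMangoldt n := by
        refine Finset.sum_congr rfl fun n _ => ?_
        rw [← moebius_mul_log_eq_vonMangoldt, mul_apply]
        conv_lhs => rw [← Nat.map_swap_divisorsAntidiagonal, Finset.sum_map]
        refine Finset.sum_congr rfl fun p _ => ?_
        simp [intCoe_apply, log_apply]
end

section
/- For every positive integer x, the sum over i from 1 to x of M(⌊x/i⌋)·log(i)·σ₀(i)/2 equals log(x!). -/
open Finset ArithmeticFunction

lemma logdiv_sum (i : ℕ) (hi : 0 < i) :
    Real.log i * (ArithmeticFunction.sigma 0 i : ℝ) / 2 =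
      ∑ d ∈ i.divisors, Real.log d := by
  have h1 : ∑ d ∈ i.divisors, Real.log (i / d : ℕ) = ∑ d ∈ i.divisors, Real.log d :=
    Nat.sum_div_divisors i (fun d => Real.log d)
  have h2 : ∀ d ∈ i.divisors, Real.log ((i / d : ℕ) : ℝ) = Real.log i - Real.log d := by
    intro d hd
    obtain ⟨hdvd, hi0⟩ := Nat.mem_divisors.mp hd
    have hd0 : 0 < d := Nat.pos_of_dvd_of_pos hdvd hi
    rw [Nat.cast_div hdvd (by exact_mod_cast hd0.ne'),
      Real.log_div (by exact_mod_cast hi.ne') (by exact_mod_cast hd0.ne')]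
  rw [Finset.sum_congr rfl h2, Finset.sum_sub_distrib, Finset.sum_const, nsmul_eq_mul] at h1
  have hcard : (ArithmeticFunction.sigma 0 i : ℝ) = (i.divisors.card : ℝ) := by
    rw [ArithmeticFunction.sigma_zero_apply]
  rw [hcard]
  linarith [h1]

lemma moebius_log (n : ℕ) (hn : 0 < n) :
    ∑ p ∈ n.divisorsAntidiagonal,
      (ArithmeticFunction.moebius p.1 : ℝ) * (∑ d ∈ p.2.divisors, Real.log d) =
      Real.log n := by
  have := (ArithmeticFunction.sum_eq_iff_sum_smul_moebius_eq
    (R := ℝ) (f := fun n => Real.log n)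
    (g := fun n => ∑ d ∈ n.divisors, Real.log d)).mp (fun n _ => rfl) n hn
  simpa [zsmul_eq_mul] using this

theorem stmt5 (x : ℕ) (hx : 0 < x) :
    ∑ i ∈ Finset.Icc 1 x,
        (mertens (x / i) : ℝ) * Real.log i * (ArithmeticFunction.sigma 0 i : ℝ) / 2 =
      Real.log (Nat.factorial x) := by
  have step1 : ∀ i ∈ Finset.Icc 1 x,
      (mertens (x / i) : ℝ) * Real.log i * (ArithmeticFunction.sigma 0 i : ℝ) / 2 =
      ∑ j ∈ Finset.Icc 1 (x / i),
        (ArithmeticFunction.moebius j : ℝ) * (∑ d ∈ i.divisors, Real.log d) := by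
    intro i hi
    obtain ⟨hi1, hix⟩ := Finset.mem_Icc.mp hi
    have : (mertens (x / i) : ℝ) = ∑ j ∈ Finset.Icc 1 (x / i),
        (ArithmeticFunction.moebius j : ℝ) := by
      simp [mertens]
    rw [mul_assoc, mul_div_assoc, logdiv_sum i hi1, this, Finset.sum_mul]
  rw [Finset.sum_congr rfl step1]
  rw [Finset.sum_sigma']
  have key : ∑ p ∈ (Finset.Icc 1 x).sigma (fun i => Finset.Icc 1 (x / i)),
      (ArithmeticFunction.moebius p.2 : ℝ) * (∑ d ∈ p.1.divisors, Real.log d) =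
      ∑ p ∈ (Finset.Icc 1 x).sigma (fun n => n.divisorsAntidiagonal),
        (ArithmeticFunction.moebius p.2.1 : ℝ) * (∑ d ∈ p.2.2.divisors, Real.log d) := by
    apply Finset.sum_nbij' (i := fun p => ⟨p.1 * p.2, (p.2, p.1)⟩)
      (j := fun p => ⟨p.2.2, p.2.1⟩)
    · rintro ⟨i, j⟩ hp
      simp only [Finset.mem_sigma, Finset.mem_Icc] at hp ⊢
      obtain ⟨⟨hi1, hix⟩, hj1, hjx⟩ := hp
      refine ⟨?_, ?_⟩
      · constructor
        · exact Nat.one_le_iff_ne_zero.mpr (Nat.mul_ne_zero (by omega) (by omega))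
        · calc i * j ≤ i * (x / i) := Nat.mul_le_mul_left i hjx
            _ ≤ x := Nat.mul_div_le x i
      · rw [Nat.mem_divisorsAntidiagonal]
        exact ⟨mul_comm j i, Nat.mul_ne_zero (by omega) (by omega)⟩
    · rintro ⟨n, a, b⟩ hp
      simp only [Finset.mem_sigma, Finset.mem_Icc, Nat.mem_divisorsAntidiagonal] at hp ⊢
      obtain ⟨⟨hn1, hnx⟩, hab, hn0⟩ := hp
      have ha : 0 < a := Nat.pos_of_ne_zero (by rintro rfl; simp at hab; omega)
      have hb : 0 < b := Nat.pos_of_ne_zero (by rintro rfl; simp at hab; omega)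
      refine ⟨⟨hb, ?_⟩, ha, ?_⟩
      · calc b ≤ a * b := Nat.le_mul_of_pos_left b ha
          _ = n := hab
          _ ≤ x := hnx
      · rw [Nat.le_div_iff_mul_le hb]
        calc a * b = n := hab
          _ ≤ x := hnx
    · rintro ⟨i, j⟩ _; rfl
    · rintro ⟨n, a, b⟩ hp
      simp only [Finset.mem_sigma, Nat.mem_divisorsAntidiagonal] at hp
      obtain ⟨_, hab, _⟩ := hp
      simp only [Sigma.mk.inj_iff]
      exact ⟨by rw [mul_comm]; exact hab, heq_of_eq rfl⟩
    · rintro ⟨i, j⟩ _; rfl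
  rw [key, Finset.sum_sigma]
  have step3 : ∀ n ∈ Finset.Icc 1 x,
      (∑ p ∈ n.divisorsAntidiagonal,
        (ArithmeticFunction.moebius p.1 : ℝ) * (∑ d ∈ p.2.divisors, Real.log d)) =
      Real.log n := by
    intro n hn
    exact moebius_log n (Finset.mem_Icc.mp hn).1
  rw [Finset.sum_congr rfl step3]
  rw [← Real.log_prod (hf := by intro n hn; exact_mod_cast
    (Nat.one_le_iff_ne_zero.mp (Finset.mem_Icc.mp hn).1))]
  congr 1
  rw [← Nat.cast_prod]
  congr 1
  rw [← Finset.Ico_add_one_right_eq_Icc]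
  exact Finset.prod_Ico_id_eq_factorial x
end

section
/- For all positive integers x and k, the sum over i from 1 to x of M(⌊x/i⌋)·i^k equals B(x) = Σ_{i=1}^x J_k(i), where J_k is the Jordan totient function. -/
open Finset ArithmeticFunction

/-- The Jordan totient function `J_k(n) = ∑_{d ∣ n} μ(d) (n/d)^k`. -/
def jordanTotient (k : ℕ) (n : ℕ) : ℤ :=
  ∑ d ∈ n.divisors, ArithmeticFunction.moebius d * ((n / d : ℕ) : ℤ) ^ k

theorem stmt8 (x k : ℕ) (hx : 0 < x) (hk : 0 < k) :
    ∑ i ∈ Finset.Icc 1 x, mertens (x / i) * (i : ℤ) ^ k =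
      ∑ i ∈ Finset.Icc 1 x, jordanTotient k i := by
  simp only [mertens, jordanTotient, Finset.sum_mul]
  rw [Finset.sum_sigma', Finset.sum_sigma']
  refine Finset.sum_bij' (fun p _ => (⟨p.2 * p.1, p.2⟩ : Σ _ : ℕ, ℕ))
    (fun p _ => (⟨p.1 / p.2, p.2⟩ : Σ _ : ℕ, ℕ)) ?_ ?_ ?_ ?_ ?_
  · rintro ⟨i, d⟩ hp
    simp only [Finset.mem_sigma, Finset.mem_Icc] at hp ⊢
    obtain ⟨⟨hi1, hix⟩, hd1, hdx⟩ := hp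
    have hi0 : 0 < i := hi1
    have hmul : d * i ≤ x := (Nat.le_div_iff_mul_le hi0).mp hdx
    refine ⟨⟨Nat.one_le_iff_ne_zero.mpr (by positivity), hmul⟩, ?_⟩
    exact Nat.mem_divisors.mpr ⟨Dvd.intro i rfl, by positivity⟩
  · rintro ⟨n, d⟩ hp
    simp only [Finset.mem_sigma, Finset.mem_Icc, Nat.mem_divisors] at hp ⊢
    obtain ⟨⟨hn1, hnx⟩, hdn, hn0⟩ := hp
    have hd0 : 0 < d := Nat.pos_of_dvd_of_pos hdn (Nat.pos_of_ne_zero hn0)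
    have hnd0 : 0 < n / d := Nat.div_pos (Nat.le_of_dvd (Nat.pos_of_ne_zero hn0) hdn) hd0
    refine ⟨⟨hnd0, le_trans (Nat.div_le_self n d) hnx⟩, hd0, ?_⟩
    rw [Nat.le_div_iff_mul_le hnd0, Nat.mul_div_cancel' hdn]
    exact hnx
  · rintro ⟨i, d⟩ hp
    simp only [Finset.mem_sigma, Finset.mem_Icc] at hp
    have : d * i / d = i := Nat.mul_div_cancel_left i hp.2.1
    simp [this]
  · rintro ⟨n, d⟩ hp
    simp only [Finset.mem_sigma, Finset.mem_Icc, Nat.mem_divisors] at hp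
    have : d * (n / d) = n := Nat.mul_div_cancel' hp.2.1
    simp [this]
  · rintro ⟨i, d⟩ hp
    simp only [Finset.mem_sigma, Finset.mem_Icc] at hp
    have : d * i / d = i := Nat.mul_div_cancel_left i hp.2.1
    simp [this]
end

section
/- For every positive integer x, the sum over i from 1 to x of M(⌊x/i⌋)·2^{ω(i)} equals Σ_{i=1}^x |μ(i)|, the number of squarefree integers up to x. -/
open Finset ArithmeticFunction

open scoped ArithmeticFunction.zeta ArithmeticFunction.Moebius ArithmeticFunction.omega

lemma zeta_mul_musq_apply (n : ℕ) (hn : n ≠ 0) :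
    ((ζ : ArithmeticFunction ℤ) * pmul μ μ) n = 2 ^ (ω n) := by
  rw [coe_zeta_mul_apply]
  have h1 : ∀ d ∈ n.divisors, (pmul (μ : ArithmeticFunction ℤ) μ) d =
      if Squarefree d then 1 else 0 := by
    intro d _
    rw [pmul_apply, ← sq]
    split_ifs with h
    · exact moebius_sq_eq_one_of_squarefree h
    · simp [moebius_eq_zero_of_not_squarefree h]
  rw [Finset.sum_congr rfl h1, ← Finset.sum_filter]
  have h2 : ∑ d ∈ n.divisors with Squarefree d, (1 : ℤ) =
      ∑ t ∈ (UniqueFactorizationMonoid.normalizedFactors n).toFinset.powerset, (1 : ℤ) :=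
    Nat.sum_divisors_filter_squarefree hn
  rw [h2, Finset.sum_const, Finset.card_powerset, Nat.factors_eq]
  simp only [cardDistinctFactors_apply, smul_eq_mul, mul_one]
  have h3 : (↑n.primeFactorsList : Multiset ℕ).toFinset = n.primeFactorsList.toFinset := rfl
  rw [h3, List.card_toFinset]
  simp

lemma conv_eq_musq (n : ℕ) (hn : n ≠ 0) :
    ∑ p ∈ n.divisorsAntidiagonal, (μ p.2 : ℤ) * 2 ^ (ω p.1) = |μ n| := by
  have key : (((ζ : ArithmeticFunction ℤ) * pmul μ μ) * μ) = pmul μ μ := by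
    rw [mul_comm ((ζ : ArithmeticFunction ℤ)) (pmul (μ : ArithmeticFunction ℤ) μ), mul_assoc,
      coe_zeta_mul_moebius, mul_one]
  have h1 : ∑ p ∈ n.divisorsAntidiagonal, (μ p.2 : ℤ) * 2 ^ (ω p.1) =
      (((ζ : ArithmeticFunction ℤ) * pmul μ μ) * μ) n := by
    rw [mul_apply]
    refine Finset.sum_congr rfl fun p hp => ?_
    rw [Nat.mem_divisorsAntidiagonal] at hp
    have hp1 : p.1 ≠ 0 := by
      intro h; apply hp.2; rw [← hp.1, h, zero_mul]
    rw [zeta_mul_musq_apply p.1 hp1, mul_comm]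
  rw [h1, key, pmul_apply, ← sq]
  by_cases h : Squarefree n
  · rw [moebius_sq_eq_one_of_squarefree h, abs_moebius_eq_one_of_squarefree h]
  · simp [moebius_eq_zero_of_not_squarefree h]

theorem stmt12 (x : ℕ) (hx : 0 < x) :
    ∑ i ∈ Finset.Icc 1 x, mertens (x / i) * 2 ^ (ArithmeticFunction.cardDistinctFactors i) =
      ∑ i ∈ Finset.Icc 1 x, |ArithmeticFunction.moebius i| := by
  have lhs : ∑ i ∈ Finset.Icc 1 x, mertens (x / i) * 2 ^ (ω i) =
      ∑ i ∈ Finset.Icc 1 x, ∑ k ∈ Finset.Icc 1 (x / i), (μ k : ℤ) * 2 ^ (ω i) := by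
    refine Finset.sum_congr rfl fun i _ => ?_
    rw [mertens, Finset.sum_mul]
  rw [lhs]
  rw [Finset.sum_sigma']
  have rhs : ∑ i ∈ Finset.Icc 1 x, |ArithmeticFunction.moebius i| =
      ∑ n ∈ Finset.Icc 1 x, ∑ p ∈ n.divisorsAntidiagonal, (μ p.2 : ℤ) * 2 ^ (ω p.1) := by
    refine Finset.sum_congr rfl fun n hn => ?_
    rw [Finset.mem_Icc] at hn
    rw [conv_eq_musq n (by omega)]
  rw [rhs, Finset.sum_sigma']
  refine Finset.sum_nbij' (fun q => ⟨q.1 * q.2, (q.1, q.2)⟩)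
    (fun q => ⟨q.2.1, q.2.2⟩) ?_ ?_ ?_ ?_ ?_
  · rintro ⟨i, k⟩ hq
    simp only [Finset.mem_sigma, Finset.mem_Icc] at hq ⊢
    obtain ⟨⟨hi1, hix⟩, hk1, hkx⟩ := hq
    rw [Nat.le_div_iff_mul_le (by omega)] at hkx
    rw [mul_comm] at hkx
    constructor
    · exact ⟨Nat.one_le_iff_ne_zero.mpr (by positivity), hkx⟩
    · rw [Nat.mem_divisorsAntidiagonal]
      exact ⟨rfl, by positivity⟩
  · rintro ⟨n, a, b⟩ hq
    simp only [Finset.mem_sigma, Finset.mem_Icc, Nat.mem_divisorsAntidiagonal] at hq ⊢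
    obtain ⟨⟨hn1, hnx⟩, hab, hn0⟩ := hq
    have ha : a ≠ 0 := by rintro rfl; simp at hab; omega
    have hb : b ≠ 0 := by rintro rfl; simp at hab; omega
    refine ⟨⟨by omega, ?_⟩, by omega, ?_⟩
    · calc a ≤ a * b := Nat.le_mul_of_pos_right a (by omega)
        _ = n := hab
        _ ≤ x := hnx
    · rw [Nat.le_div_iff_mul_le (by omega), mul_comm, hab]; exact hnx
  · rintro ⟨i, k⟩ _; rfl
  · rintro ⟨n, a, b⟩ hq
    simp only [Finset.mem_sigma, Nat.mem_divisorsAntidiagonal] at hq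
    simp [hq.2.1]
  · rintro ⟨i, k⟩ _; rfl
end

section
/- For every positive integer x, the sum over i from 1 to x of M(⌊x/i⌋)·d(i²) equals Σ_{i=1}^x 2^{ω(i)}, where d(n) = σ₀(n) is the number of divisors of n and ω(i) is the number of distinct prime factors of i. -/
open Finset ArithmeticFunction

/-- `n ↦ σ₀(n²)` as an arithmetic function over `ℤ`. -/
def Fsq : ArithmeticFunction ℤ := ⟨fun n => (ArithmeticFunction.sigma 0 (n ^ 2) : ℤ), by simp⟩

/-- `n ↦ 2^(ω n)` as an arithmetic function over `ℤ`. -/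
def Gom : ArithmeticFunction ℤ :=
  ⟨fun n => if n = 0 then 0 else (2 : ℤ) ^ (ArithmeticFunction.cardDistinctFactors n), rfl⟩

lemma Fsq_mult : Fsq.IsMultiplicative := by
  constructor
  · simp [Fsq, ArithmeticFunction.sigma_zero_apply]
  · intro m n h
    have h2 : Nat.Coprime (m ^ 2) (n ^ 2) := Nat.Coprime.pow 2 2 h
    simp only [Fsq, ArithmeticFunction.coe_mk, mul_pow]
    exact_mod_cast congrArg (Nat.cast (R := ℤ))
      ((ArithmeticFunction.isMultiplicative_sigma (k := 0)).map_mul_of_coprime h2)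

lemma Gom_mult : Gom.IsMultiplicative := by
  constructor
  · simp [Gom]
  · intro m n h
    rcases eq_or_ne m 0 with rfl | hm
    · simp [Gom]
    rcases eq_or_ne n 0 with rfl | hn
    · simp [Gom]
    simp only [Gom, ArithmeticFunction.coe_mk, mul_eq_zero, hm, hn, or_self, if_false, if_neg hm,
      if_neg hn]
    rw [← pow_add]
    congr 1
    have hcard : ∀ t : ℕ, ArithmeticFunction.cardDistinctFactors t = t.primeFactors.card := by
      intro t
      rw [ArithmeticFunction.cardDistinctFactors_apply, ← List.card_toFinset]
      rfl
    rw [hcard, hcard, hcard, Nat.primeFactors_mul hm hn,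
      Finset.card_union_of_disjoint (Nat.Coprime.disjoint_primeFactors h)]

lemma card_divisors_prime_pow {p k : ℕ} (hp : p.Prime) : (p ^ k).divisors.card = k + 1 := by
  rw [Nat.divisors_prime_pow hp, Finset.card_map, Finset.card_range]

lemma key_div_sum : ∀ n > 0, ∑ d ∈ n.divisors, (2 : ℤ) ^ (ArithmeticFunction.cardDistinctFactors d)
    = (ArithmeticFunction.sigma 0 (n ^ 2) : ℤ) := by
  have hmain : (↑(ArithmeticFunction.zeta) : ArithmeticFunction ℤ) * Gom = Fsq := by
    rw [ArithmeticFunction.IsMultiplicative.eq_iff_eq_on_prime_powers _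
      ((ArithmeticFunction.isMultiplicative_zeta.natCast).mul Gom_mult) Fsq Fsq_mult]
    intro p k hp
    rw [ArithmeticFunction.coe_zeta_mul_apply, Nat.sum_divisors_prime_pow hp]
    simp only [Fsq, ArithmeticFunction.coe_mk, ← pow_mul,
      ArithmeticFunction.sigma_zero_apply, card_divisors_prime_pow hp]
    rw [Finset.sum_range_succ']
    have h0 : Gom (p ^ 0) = 1 := by simp [Gom]
    have h1 : ∀ j, Gom (p ^ (j + 1)) = 2 := by
      intro j
      simp [Gom, pow_ne_zero _ hp.pos.ne', hp.ne_zero,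
        ArithmeticFunction.cardDistinctFactors_apply_prime_pow hp (Nat.succ_ne_zero j)]
    rw [h0, Finset.sum_congr rfl fun j _ => h1 j, Finset.sum_const, Finset.card_range]
    push_cast
    ring
  intro n hn
  have := congrArg (fun f => f n) hmain
  simp only [ArithmeticFunction.coe_zeta_mul_apply] at this
  simp only [Fsq, ArithmeticFunction.coe_mk] at this
  rw [← this]
  refine Finset.sum_congr rfl fun d hd => ?_
  simp [Gom, (Nat.pos_of_mem_divisors hd).ne']

lemma key_moebius : ∀ n > 0, ∑ p ∈ n.divisorsAntidiagonal,
    (ArithmeticFunction.moebius p.1 : ℤ) * (ArithmeticFunction.sigma 0 (p.2 ^ 2) : ℤ)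
    = (2 : ℤ) ^ (ArithmeticFunction.cardDistinctFactors n) := by
  exact (ArithmeticFunction.sum_eq_iff_sum_mul_moebius_eq
    (f := fun d => (2 : ℤ) ^ (ArithmeticFunction.cardDistinctFactors d))
    (g := fun n => (ArithmeticFunction.sigma 0 (n ^ 2) : ℤ))).mp key_div_sum

theorem stmt13 (x : ℕ) (hx : 0 < x) :
    ∑ i ∈ Finset.Icc 1 x, mertens (x / i) * (ArithmeticFunction.sigma 0 (i ^ 2) : ℤ) =
      ∑ i ∈ Finset.Icc 1 x, (2 : ℤ) ^ (ArithmeticFunction.cardDistinctFactors i) := by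
  have hR : ∀ n ∈ Finset.Icc 1 x, (2 : ℤ) ^ (ArithmeticFunction.cardDistinctFactors n)
      = ∑ p ∈ n.divisorsAntidiagonal,
        (ArithmeticFunction.moebius p.1 : ℤ) * (ArithmeticFunction.sigma 0 (p.2 ^ 2) : ℤ) := by
    intro n hn
    exact (key_moebius n (Finset.mem_Icc.mp hn).1).symm
  rw [Finset.sum_congr rfl hR]
  have hL : ∀ i ∈ Finset.Icc 1 x, mertens (x / i) * (ArithmeticFunction.sigma 0 (i ^ 2) : ℤ)
      = ∑ k ∈ Finset.Icc 1 (x / i),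
          (ArithmeticFunction.moebius k : ℤ) * (ArithmeticFunction.sigma 0 (i ^ 2) : ℤ) := by
    intro i _
    rw [mertens, Finset.sum_mul]
  rw [Finset.sum_congr rfl hL, Finset.sum_sigma', Finset.sum_sigma']
  refine Finset.sum_nbij' (i := fun p => ⟨p.2 * p.1, (p.2, p.1)⟩)
    (j := fun q => ⟨q.2.2, q.2.1⟩) ?_ ?_ ?_ ?_ ?_
  · rintro ⟨i, k⟩ hp
    simp only [Finset.mem_sigma, Finset.mem_Icc] at hp
    obtain ⟨⟨hi1, hix⟩, hk1, hkx⟩ := hp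
    have hi0 : 0 < i := hi1
    have hmul : k * i ≤ x := (Nat.le_div_iff_mul_le hi0).mp hkx
    simp only [Finset.mem_sigma, Finset.mem_Icc, Nat.mem_divisorsAntidiagonal]
    have hki : 0 < k * i := Nat.mul_pos hk1 hi0
    exact ⟨⟨hki, hmul⟩, trivial, hki.ne'⟩
  · rintro ⟨n, a, b⟩ hq
    simp only [Finset.mem_sigma, Finset.mem_Icc, Nat.mem_divisorsAntidiagonal] at hq
    obtain ⟨⟨hn1, hnx⟩, hab, hn0⟩ := hq
    have ha0 : a ≠ 0 := by rintro rfl; simp at hab; omega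
    have hb0 : b ≠ 0 := by rintro rfl; simp at hab; omega
    have hb0' : 0 < b := Nat.pos_of_ne_zero hb0
    simp only [Finset.mem_sigma, Finset.mem_Icc]
    refine ⟨⟨hb0', ?_⟩, Nat.pos_of_ne_zero ha0, ?_⟩
    · calc b ≤ a * b := Nat.le_mul_of_pos_left b (Nat.pos_of_ne_zero ha0)
        _ = n := hab
        _ ≤ x := hnx
    · rw [Nat.le_div_iff_mul_le hb0', hab]; exact hnx
  · rintro ⟨i, k⟩ _; rfl
  · rintro ⟨n, a, b⟩ hq
    simp only [Finset.mem_sigma, Nat.mem_divisorsAntidiagonal] at hq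
    obtain ⟨_, hab, _⟩ := hq
    simp [hab]
  · rintro ⟨i, k⟩ _; rfl
end

section
/- For every positive integer x, the sum over i from 1 to x of M(⌊x/i⌋)·d(i)² equals Σ_{i=1}^x d(i²), where d = σ₀ is the number-of-divisors function. -/
open Finset ArithmeticFunction

/-- The arithmetic function `n ↦ σ₀(n²)`. -/
def sigmaSq : ArithmeticFunction ℕ := ⟨fun n => ArithmeticFunction.sigma 0 (n ^ 2), by simp⟩

lemma sigmaSq_apply (n : ℕ) : sigmaSq n = ArithmeticFunction.sigma 0 (n ^ 2) := rfl

lemma sigmaSq_mult : sigmaSq.IsMultiplicative := by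
  refine ⟨by simp [sigmaSq_apply, sigma_zero_apply], fun {m n} h => ?_⟩
  simp only [sigmaSq_apply, mul_pow]
  exact isMultiplicative_sigma.map_mul_of_coprime (Nat.Coprime.pow _ _ h)

lemma key_div_sum_s14 : (sigmaSq * (ArithmeticFunction.zeta : ArithmeticFunction ℕ)) = (ArithmeticFunction.sigma 0).pmul (ArithmeticFunction.sigma 0) := by
  rw [IsMultiplicative.eq_iff_eq_on_prime_powers _ (sigmaSq_mult.mul isMultiplicative_zeta)
    _ (isMultiplicative_sigma.pmul isMultiplicative_sigma)]
  intro p i hp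
  rw [mul_zeta_apply, Nat.sum_divisors_prime_pow hp, pmul_apply,
    sigma_zero_apply_prime_pow hp]
  have : ∀ j, sigmaSq (p ^ j) = 2 * j + 1 := by
    intro j
    rw [sigmaSq_apply, ← pow_mul, sigma_zero_apply_prime_pow hp]
    ring
  simp only [this]
  induction i with
  | zero => simp
  | succ n ih => rw [Finset.sum_range_succ, ih]; ring

lemma key_sum (n : ℕ) (hn : 0 < n) :
    ∑ p ∈ n.divisorsAntidiagonal, (moebius p.1 : ℤ) * (ArithmeticFunction.sigma 0 p.2 : ℤ) ^ 2
      = (ArithmeticFunction.sigma 0 (n ^ 2) : ℤ) := by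
  have H := (sum_eq_iff_sum_smul_moebius_eq (R := ℤ)
    (f := fun i => (ArithmeticFunction.sigma 0 (i ^ 2) : ℤ))
    (g := fun i => ((ArithmeticFunction.sigma 0 i : ℤ)) ^ 2)).mp ?_ n hn
  · simpa [zsmul_eq_mul] using H
  · intro m hm
    have h1 : ∑ i ∈ m.divisors, ArithmeticFunction.sigma 0 (i ^ 2)
        = (ArithmeticFunction.sigma 0 m) ^ 2 := by
      have := congrArg (fun f : ArithmeticFunction ℕ => f m) key_div_sum_s14
      simp only [mul_zeta_apply, pmul_apply, sigmaSq_apply] at this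
      rw [this, sq]
    have := congrArg (fun k : ℕ => (k : ℤ)) h1
    push_cast at this
    simpa using this

theorem stmt14 (x : ℕ) (hx : 0 < x) :
    ∑ i ∈ Finset.Icc 1 x, mertens (x / i) * (ArithmeticFunction.sigma 0 i : ℤ) ^ 2 =
      ∑ i ∈ Finset.Icc 1 x, (ArithmeticFunction.sigma 0 (i ^ 2) : ℤ) := by
  have hswap :
      ∑ i ∈ Finset.Icc 1 x, ∑ k ∈ Finset.Icc 1 (x / i),
          (moebius k : ℤ) * (ArithmeticFunction.sigma 0 i : ℤ) ^ 2
        = ∑ n ∈ Finset.Icc 1 x, ∑ p ∈ n.divisorsAntidiagonal,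
            (moebius p.1 : ℤ) * (ArithmeticFunction.sigma 0 p.2 : ℤ) ^ 2 := by
    rw [Finset.sum_sigma', Finset.sum_sigma']
    refine Finset.sum_nbij' (fun q => ⟨q.1 * q.2, (q.2, q.1)⟩)
      (fun q => ⟨q.2.2, q.2.1⟩) ?_ ?_ ?_ ?_ ?_
    · rintro ⟨i, k⟩ hq
      simp only [Finset.mem_sigma, Finset.mem_Icc, Nat.mem_divisorsAntidiagonal] at hq ⊢
      obtain ⟨⟨hi1, hix⟩, hk1, hkx⟩ := hq
      have hi : 0 < i := hi1
      have hmul : i * k ≤ x := (Nat.le_div_iff_mul_le hi).mp hkx |>.trans_eq' (mul_comm k i)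
      exact ⟨⟨Nat.one_le_iff_ne_zero.mpr (by positivity), hmul⟩, mul_comm k i,
        by positivity⟩
    · rintro ⟨n, a, b⟩ hq
      simp only [Finset.mem_sigma, Finset.mem_Icc, Nat.mem_divisorsAntidiagonal] at hq ⊢
      obtain ⟨⟨hn1, hnx⟩, hab, hn0⟩ := hq
      have hb : 0 < b := Nat.pos_of_ne_zero (by rintro rfl; simp at hab; omega)
      have ha : 0 < a := Nat.pos_of_ne_zero (by rintro rfl; simp at hab; omega)
      refine ⟨⟨hb, le_trans (Nat.le_of_dvd (by omega) ⟨a, by rw [← hab, mul_comm]⟩) hnx⟩, ha, ?_⟩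
      rw [Nat.le_div_iff_mul_le hb, hab]
      exact hnx
    · rintro ⟨i, k⟩ _; rfl
    · rintro ⟨n, a, b⟩ hq
      simp only [Finset.mem_sigma, Nat.mem_divisorsAntidiagonal] at hq
      obtain ⟨_, hab, _⟩ := hq
      simp [mul_comm, hab]
    · rintro ⟨i, k⟩ _; rfl
  calc ∑ i ∈ Finset.Icc 1 x, mertens (x / i) * (ArithmeticFunction.sigma 0 i : ℤ) ^ 2
      = ∑ i ∈ Finset.Icc 1 x, ∑ k ∈ Finset.Icc 1 (x / i),
          (moebius k : ℤ) * (ArithmeticFunction.sigma 0 i : ℤ) ^ 2 := by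
        simp [mertens, Finset.sum_mul]
    _ = ∑ n ∈ Finset.Icc 1 x, ∑ p ∈ n.divisorsAntidiagonal,
          (moebius p.1 : ℤ) * (ArithmeticFunction.sigma 0 p.2 : ℤ) ^ 2 := hswap
    _ = ∑ i ∈ Finset.Icc 1 x, (ArithmeticFunction.sigma 0 (i ^ 2) : ℤ) := by
        refine Finset.sum_congr rfl fun n hn => ?_
        exact key_sum n (Finset.mem_Icc.mp hn).1
end

section
/- For every positive integer x, the sum over i from 1 to x of M(⌊x/i⌋)·(i/φ(i)) equals Σ_{i=1}^x μ(i)²/φ(i). -/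
open Finset ArithmeticFunction

/-- Totient of a product of distinct primes. -/
lemma totient_prod_primes {t : Finset ℕ} (ht : ∀ p ∈ t, p.Prime) :
    Nat.totient (∏ p ∈ t, p) = ∏ p ∈ t, (p - 1) := by
  classical
  induction t using Finset.induction_on with
  | empty => simp
  | insert a s ha ih =>
    have hap : a.Prime := ht a (mem_insert_self a s)
    have hcop : Nat.Coprime a (∏ p ∈ s, p) := by
      apply Nat.Coprime.prod_right
      intro p hp
      exact (Nat.coprime_primes hap (ht p (mem_insert_of_mem hp))).mpr
        (fun h => ha (h ▸ hp))
    rw [prod_insert ha, prod_insert ha, Nat.totient_mul hcop,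
      Nat.totient_prime hap, ih (fun p hp => ht p (mem_insert_of_mem hp))]

/-- `n/φ(n) = ∑_{d ∣ n} μ(d)²/φ(d)`. -/
lemma key1 : ∀ n > 0, (∑ d ∈ Nat.divisors n,
    (moebius d : ℚ) ^ 2 / (Nat.totient d : ℚ)) = (n : ℚ) / (Nat.totient n : ℚ) := by
  intro n hn
  have h0 : n ≠ 0 := hn.ne'
  -- restrict to squarefree divisors
  have hfil : ∑ d ∈ Nat.divisors n, (moebius d : ℚ) ^ 2 / (Nat.totient d : ℚ) =
      ∑ d ∈ (Nat.divisors n).filter Squarefree, (moebius d : ℚ) ^ 2 / (Nat.totient d : ℚ) := by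
    refine (Finset.sum_filter_of_ne ?_).symm
    intro d _ hd
    by_contra hsq
    rw [moebius_eq_zero_of_not_squarefree hsq] at hd
    simp at hd
  have hsq : ∀ d : ℕ, Squarefree d → (moebius d : ℚ) ^ 2 = 1 := by
    intro d hd
    rw [moebius_apply_of_squarefree hd]
    push_cast
    rw [← pow_mul, mul_comm, pow_mul]
    simp
  have hfil2 : ∑ d ∈ (Nat.divisors n).filter Squarefree, (moebius d : ℚ) ^ 2 / (Nat.totient d : ℚ) =
      ∑ d ∈ (Nat.divisors n).filter Squarefree, ((Nat.totient d : ℚ))⁻¹ := by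
    refine Finset.sum_congr rfl fun d hd => ?_
    rw [hsq d (Finset.mem_filter.mp hd).2, one_div]
  rw [hfil, hfil2]
  rw [Nat.sum_divisors_filter_squarefree h0, Nat.factors_eq]
  simp only [List.toFinset_coe, Nat.toFinset_factors]
  have hstep : ∀ t ∈ n.primeFactors.powerset,
      ((Nat.totient t.val.prod : ℚ))⁻¹ =
        ∏ p ∈ t, (((p : ℚ) - 1)⁻¹) := by
    intro t ht
    have htsub := Finset.mem_powerset.mp ht
    have htp : ∀ p ∈ t, p.Prime := fun p hp =>
      Nat.prime_of_mem_primeFactors (htsub hp)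
    have hval : t.val.prod = ∏ p ∈ t, p := by
      rw [Finset.prod_eq_multiset_prod]
      simp
    rw [hval, totient_prod_primes htp]
    push_cast
    rw [Finset.prod_inv_distrib]
    congr 1
    refine Finset.prod_congr rfl fun p hp => ?_
    have : 2 ≤ p := (htp p hp).two_le
    rw [Nat.cast_pred (by omega)]
  rw [Finset.sum_congr rfl hstep]
  rw [show (∑ t ∈ n.primeFactors.powerset, ∏ p ∈ t, (((p : ℚ) - 1)⁻¹)) =
      ∏ p ∈ n.primeFactors, ((((p : ℚ) - 1)⁻¹) + 1) from by rw [Finset.prod_add]; simp]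
  -- now LHS : ∏ p ∈ n.primeFactors, ((p-1)⁻¹ + 1) = n / φ n
  rw [Nat.totient_eq_mul_prod_factors n]
  have hn0 : (n : ℚ) ≠ 0 := Nat.cast_ne_zero.mpr h0
  rw [div_mul_eq_div_div, div_self hn0, one_div, ← Finset.prod_inv_distrib]
  refine Finset.prod_congr rfl fun p hp => ?_
  have hp2 : 2 ≤ p := (Nat.prime_of_mem_primeFactors hp).two_le
  have hp0 : (p : ℚ) ≠ 0 := by positivity
  have hp1 : (p : ℚ) - 1 ≠ 0 := by
    have : (2 : ℚ) ≤ (p : ℚ) := by exact_mod_cast hp2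
    linarith
  field_simp
  ring

/-- Möbius inversion form of `key1`. -/
lemma key2 (n : ℕ) (hn : 0 < n) :
    ∑ d ∈ Nat.divisors n, (moebius (n / d) : ℚ) * ((d : ℚ) / (Nat.totient d : ℚ)) =
      (moebius n : ℚ) ^ 2 / (Nat.totient n : ℚ) := by
  have := (ArithmeticFunction.sum_eq_iff_sum_mul_moebius_eq
    (f := fun d => (moebius d : ℚ) ^ 2 / (Nat.totient d : ℚ))
    (g := fun n => (n : ℚ) / (Nat.totient n : ℚ))).mp key1 n hn
  rw [← this, ← Nat.sum_divisorsAntidiagonal'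
    (f := fun a b => (moebius a : ℚ) * ((b : ℚ) / (Nat.totient b : ℚ)))]

/-- Hyperbola-style double counting. -/
lemma hyperbola (F : ℕ → ℕ → ℚ) (x : ℕ) :
    ∑ i ∈ Finset.Icc 1 x, ∑ j ∈ Finset.Icc 1 (x / i), F i j =
      ∑ n ∈ Finset.Icc 1 x, ∑ d ∈ Nat.divisors n, F d (n / d) := by
  rw [Finset.sum_sigma', Finset.sum_sigma']
  refine Finset.sum_nbij' (fun p => ⟨p.1 * p.2, p.1⟩) (fun p => ⟨p.2, p.1 / p.2⟩)
    ?_ ?_ ?_ ?_ ?_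
  · rintro ⟨i, j⟩ h
    simp only [Finset.mem_sigma, Finset.mem_Icc] at h ⊢
    obtain ⟨⟨hi1, hix⟩, hj1, hjx⟩ := h
    have hi0 : 0 < i := hi1
    refine ⟨⟨?_, ?_⟩, ?_⟩
    · exact Nat.one_le_iff_ne_zero.mpr (Nat.mul_ne_zero (by omega) (by omega))
    · calc i * j ≤ i * (x / i) := Nat.mul_le_mul_left i hjx
        _ ≤ x := Nat.mul_div_le x i
    · exact Nat.mem_divisors.mpr ⟨dvd_mul_right i j, by positivity⟩
  · rintro ⟨n, d⟩ h
    simp only [Finset.mem_sigma, Finset.mem_Icc, Nat.mem_divisors] at h ⊢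
    obtain ⟨⟨hn1, hnx⟩, hdn, hn0⟩ := h
    have hd0 : 0 < d := Nat.pos_of_dvd_of_pos hdn hn1
    refine ⟨⟨hd0, le_trans (Nat.le_of_dvd hn1 hdn) hnx⟩, ?_, Nat.div_le_div_right hnx⟩
    exact Nat.one_le_div_iff hd0 |>.mpr (Nat.le_of_dvd hn1 hdn)
  · rintro ⟨i, j⟩ h
    simp only [Finset.mem_sigma, Finset.mem_Icc] at h
    have : i * j / i = j := Nat.mul_div_cancel_left j h.1.1
    simp [this]
  · rintro ⟨n, d⟩ h
    simp only [Finset.mem_sigma, Nat.mem_divisors] at h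
    have : d * (n / d) = n := Nat.mul_div_cancel' h.2.1
    simp [this]
  · rintro ⟨i, j⟩ h
    simp only [Finset.mem_sigma, Finset.mem_Icc] at h
    simp [Nat.mul_div_cancel_left j h.1.1]

theorem stmt15 (x : ℕ) (hx : 0 < x) :
    ∑ i ∈ Finset.Icc 1 x, (mertens (x / i) : ℚ) * ((i : ℚ) / (Nat.totient i : ℚ)) =
      ∑ i ∈ Finset.Icc 1 x,
        (ArithmeticFunction.moebius i : ℚ) ^ 2 / (Nat.totient i : ℚ) := by
  have hmert : ∀ i : ℕ, (mertens (x / i) : ℚ) = ∑ j ∈ Finset.Icc 1 (x / i), (moebius j : ℚ) := by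
    intro i
    simp [mertens]
  calc
    ∑ i ∈ Finset.Icc 1 x, (mertens (x / i) : ℚ) * ((i : ℚ) / (Nat.totient i : ℚ))
      = ∑ i ∈ Finset.Icc 1 x, ∑ j ∈ Finset.Icc 1 (x / i),
          (moebius j : ℚ) * ((i : ℚ) / (Nat.totient i : ℚ)) := by
        refine Finset.sum_congr rfl fun i _ => ?_
        rw [hmert i, Finset.sum_mul]
    _ = ∑ n ∈ Finset.Icc 1 x, ∑ d ∈ Nat.divisors n,
          (moebius (n / d) : ℚ) * ((d : ℚ) / (Nat.totient d : ℚ)) :=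
        hyperbola (fun i j => (moebius j : ℚ) * ((i : ℚ) / (Nat.totient i : ℚ))) x
    _ = ∑ i ∈ Finset.Icc 1 x, (moebius i : ℚ) ^ 2 / (Nat.totient i : ℚ) := by
        refine Finset.sum_congr rfl fun n hn => ?_
        exact key2 n (Finset.mem_Icc.mp hn).1
end
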